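/- For every real-valued function θ with θ(1) ≥ 2 and θ(n) ≥ n for all n, let B_θ be the set of positive integers containing 1 and all n ≥ 2 whose prime factorization n = p₁^{α₁}···p_k^{α_k} with p₁ < p₂ < ... < p_k satisfies p_i ≤ θ(p₁^{α₁}···p_{i-1}^{α_{i-1}}) for all 1 ≤ i ≤ k. Then every natural number m factors uniquely as m = n·r where n ∈ B_θ and the smallest prime factor of r exceeds θ(n). -/

import Mathlib

open scoped Classical

/-- Membership in the set `B_θ`: `n ≥ 1` and each prime `p` dividing `n` satisfies
`p ≤ θ` applied to the product of the prime powers in `n` with primes smaller than `p`. -/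
def InB (θ : ℕ → ℝ) (n : ℕ) : Prop :=
  0 < n ∧ ∀ p ∈ n.primeFactors,
    (p : ℝ) ≤ θ (∏ q ∈ n.primeFactors.filter (· < p), q ^ n.factorization q)

/-- Auxiliary predicate: `(n, r)` is a good factorization of `m`. -/
def Good (θ : ℕ → ℝ) (m n r : ℕ) : Prop :=
  n * r = m ∧ InB θ n ∧ ∀ p : ℕ, p.Prime → p ∣ r → θ n < (p : ℝ)

section Aux

variable {θ : ℕ → ℝ} {m n r : ℕ}

lemma good_prime_le (hθ : ∀ n : ℕ, 1 ≤ n → (n : ℝ) ≤ θ n)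
    (h : Good θ m n r) {p : ℕ} (hpn : p ∣ n) : (p : ℝ) ≤ θ n := by
  have h3 : p ≤ n := Nat.le_of_dvd h.2.1.1 hpn
  have h2 : (n : ℝ) ≤ θ n := hθ n h.2.1.1
  have : (p : ℝ) ≤ (n : ℝ) := by exact_mod_cast h3
  linarith

lemma good_not_dvd_r (hθ : ∀ n : ℕ, 1 ≤ n → (n : ℝ) ≤ θ n)
    (h : Good θ m n r) {p : ℕ} (hp : p.Prime) (hpn : p ∣ n) : ¬ p ∣ r := by
  intro hpr
  have h1 := h.2.2 p hp hpr
  have h2 := good_prime_le hθ h hpn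
  linarith

lemma good_fact (hθ : ∀ n : ℕ, 1 ≤ n → (n : ℝ) ≤ θ n) (hm : 0 < m)
    (h : Good θ m n r) {p : ℕ}
    (hp : p ∈ n.primeFactors) : m.factorization p = n.factorization p := by
  have hn0 : n ≠ 0 := h.2.1.1.ne'
  have hr0 : r ≠ 0 := by
    rintro rfl
    have h1 := h.1
    rw [mul_zero] at h1
    omega
  have hpp : p.Prime := Nat.prime_of_mem_primeFactors hp
  have hpr : ¬ p ∣ r := good_not_dvd_r hθ h hpp (Nat.dvd_of_mem_primeFactors hp)
  rw [← h.1, Nat.factorization_mul hn0 hr0, Finsupp.add_apply,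
    Nat.factorization_eq_zero_of_not_dvd hpr, add_zero]

/-- downward closedness of the prime factors of the `B`-part. -/
lemma good_dc (hθ : ∀ n : ℕ, 1 ≤ n → (n : ℝ) ≤ θ n) (hm : 0 < m)
    (h : Good θ m n r) {p q : ℕ} (hp : p ∈ n.primeFactors)
    (hq : q ∈ m.primeFactors) (hlt : q < p) : q ∈ n.primeFactors := by
  have hn0 : n ≠ 0 := h.2.1.1.ne'
  have hqp : q.Prime := Nat.prime_of_mem_primeFactors hq
  by_contra hqn
  have hqn' : ¬ q ∣ n := fun hd => hqn (Nat.mem_primeFactors.2 ⟨hqp, hd, hn0⟩)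
  have hqm : q ∣ n * r := h.1 ▸ Nat.dvd_of_mem_primeFactors hq
  have hqr : q ∣ r := (hqp.dvd_mul.1 hqm).resolve_left hqn'
  have h1 := h.2.2 q hqp hqr
  have h2 := good_prime_le hθ h (Nat.dvd_of_mem_primeFactors hp)
  have : (q : ℝ) < (p : ℝ) := by exact_mod_cast hlt
  linarith

lemma good_prod (hθ : ∀ n : ℕ, 1 ≤ n → (n : ℝ) ≤ θ n) (hm : 0 < m)
    (h : Good θ m n r) : ∏ p ∈ n.primeFactors, p ^ m.factorization p = n := by
  have hn0 : n ≠ 0 := h.2.1.1.ne'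
  have h1 := Nat.factorization_prod_pow_eq_self hn0
  rw [Finsupp.prod, Nat.support_factorization] at h1
  calc ∏ p ∈ n.primeFactors, p ^ m.factorization p
      = ∏ p ∈ n.primeFactors, p ^ n.factorization p :=
        Finset.prod_congr rfl fun p hp => by rw [good_fact hθ hm h hp]
    _ = n := h1

lemma good_subset (hθ : ∀ n : ℕ, 1 ≤ n → (n : ℝ) ≤ θ n) (hm : 0 < m)
    {n' r' : ℕ} (h : Good θ m n r) (h' : Good θ m n' r') :
    n.primeFactors ⊆ n'.primeFactors ∨ n'.primeFactors ⊆ n.primeFactors := by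
  by_contra hcon
  push_neg at hcon
  obtain ⟨a, haS, haS'⟩ := Finset.not_subset.1 hcon.1
  obtain ⟨b, hbS', hbS⟩ := Finset.not_subset.1 hcon.2
  have hm0 : m ≠ 0 := hm.ne'
  have ham : a ∈ m.primeFactors := Nat.mem_primeFactors.2
    ⟨Nat.prime_of_mem_primeFactors haS,
     (Nat.dvd_of_mem_primeFactors haS).trans ⟨r, h.1.symm⟩, hm0⟩
  have hbm : b ∈ m.primeFactors := Nat.mem_primeFactors.2
    ⟨Nat.prime_of_mem_primeFactors hbS',
     (Nat.dvd_of_mem_primeFactors hbS').trans ⟨r', h'.1.symm⟩, hm0⟩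
  rcases lt_trichotomy a b with hab | rfl | hba
  · exact haS' (good_dc hθ hm h' hbS' ham hab)
  · exact haS' hbS'
  · exact hbS (good_dc hθ hm h haS hbm hba)

lemma good_eq_of_subset (hθ : ∀ n : ℕ, 1 ≤ n → (n : ℝ) ≤ θ n) (hm : 0 < m)
    {n' r' : ℕ} (h : Good θ m n r) (h' : Good θ m n' r')
    (hsub : n.primeFactors ⊆ n'.primeFactors) : n = n' := by
  have hm0 : m ≠ 0 := hm.ne'
  have hn0 : n ≠ 0 := h.2.1.1.ne'
  have hsub' : n'.primeFactors ⊆ n.primeFactors := by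
    by_contra hcon
    obtain ⟨p, hpS', hpS⟩ := Finset.not_subset.1 hcon
    -- take the minimal such p
    set T : Finset ℕ := n'.primeFactors \ n.primeFactors with hT
    have hTne : T.Nonempty := ⟨p, Finset.mem_sdiff.2 ⟨hpS', hpS⟩⟩
    set q := T.min' hTne with hq
    have hqT : q ∈ T := T.min'_mem hTne
    have hqS' : q ∈ n'.primeFactors := (Finset.mem_sdiff.1 hqT).1
    have hqS : q ∉ n.primeFactors := (Finset.mem_sdiff.1 hqT).2
    have hqp : q.Prime := Nat.prime_of_mem_primeFactors hqS'
    have hqn : ¬ q ∣ n := fun hd => hqS (Nat.mem_primeFactors.2 ⟨hqp, hd, hn0⟩)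
    have hqm : q ∣ n * r := h.1 ▸
      (Nat.dvd_of_mem_primeFactors hqS').trans ⟨r', h'.1.symm⟩
    have hqr : q ∣ r := (hqp.dvd_mul.1 hqm).resolve_left hqn
    have h1 : θ n < (q : ℝ) := h.2.2 q hqp hqr
    have h2 := h'.2.1.2 q hqS'
    have hqmm : q ∈ m.primeFactors := Nat.mem_primeFactors.2
      ⟨hqp, (Nat.dvd_of_mem_primeFactors hqS').trans ⟨r', h'.1.symm⟩, hm0⟩
    have hfe : n'.primeFactors.filter (· < q) = n.primeFactors := by
      ext x
      simp only [Finset.mem_filter]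
      constructor
      · rintro ⟨hxS', hxq⟩
        by_contra hxS
        have : q ≤ x := T.min'_le x (Finset.mem_sdiff.2 ⟨hxS', hxS⟩)
        omega
      · intro hxS
        refine ⟨hsub hxS, ?_⟩
        have hxm : x ∈ m.primeFactors := Nat.mem_primeFactors.2
          ⟨Nat.prime_of_mem_primeFactors hxS,
           (Nat.dvd_of_mem_primeFactors hxS).trans ⟨r, h.1.symm⟩, hm0⟩
        rcases lt_trichotomy x q with hlt1 | hlt1 | hlt1
        · exact hlt1
        · exact absurd (hlt1 ▸ hxS) hqS
        · exact absurd (good_dc hθ hm h hxS hqmm hlt1) hqS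
    rw [hfe] at h2
    have hpe : ∏ x ∈ n.primeFactors, x ^ n'.factorization x = n := by
      calc ∏ x ∈ n.primeFactors, x ^ n'.factorization x
          = ∏ x ∈ n.primeFactors, x ^ m.factorization x :=
            Finset.prod_congr rfl fun x hx => by rw [good_fact hθ hm h' (hsub hx)]
        _ = n := good_prod hθ hm h
    rw [hpe] at h2
    linarith
  have hSeq : n.primeFactors = n'.primeFactors :=
    Finset.Subset.antisymm hsub hsub'
  rw [← good_prod hθ hm h, ← good_prod hθ hm h', hSeq]

lemma good_unique (hθ : ∀ n : ℕ, 1 ≤ n → (n : ℝ) ≤ θ n) (hm : 0 < m)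
    {n' r' : ℕ} (h : Good θ m n r) (h' : Good θ m n' r') : n = n' ∧ r = r' := by
  have hn : n = n' := by
    rcases good_subset hθ hm h h' with hs | hs
    · exact good_eq_of_subset hθ hm h h' hs
    · exact (good_eq_of_subset hθ hm h' h hs).symm
  subst hn
  refine ⟨rfl, ?_⟩
  have := h.1.trans h'.1.symm
  exact Nat.eq_of_mul_eq_mul_left h.2.1.1 this

lemma good_exists (hθ : ∀ n : ℕ, 1 ≤ n → (n : ℝ) ≤ θ n) :
    ∀ m : ℕ, 0 < m → ∃ n r : ℕ, Good θ m n r := by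
  intro m
  induction m using Nat.strong_induction_on with
  | _ m ih =>
  intro hm
  rcases eq_or_lt_of_le (show 1 ≤ m from hm) with h1 | h2
  · refine ⟨1, 1, by omega, ⟨one_pos, by simp⟩, fun p hp hpd => ?_⟩
    exact absurd (Nat.dvd_one.1 hpd ▸ hp) Nat.not_prime_one
  · -- m ≥ 2
    have hm0 : m ≠ 0 := hm.ne'
    have hne : m.primeFactors.Nonempty := Nat.nonempty_primeFactors.2 h2
    set P := m.primeFactors.max' hne with hP
    have hPm : P ∈ m.primeFactors := m.primeFactors.max'_mem hne
    have hPp : P.Prime := Nat.prime_of_mem_primeFactors hPm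
    set k := m.factorization P with hk
    have hk0 : 0 < k := hPp.factorization_pos_of_dvd hm0 (Nat.dvd_of_mem_primeFactors hPm)
    set m₀ := m / P ^ k with hm₀
    have hmul : m₀ * P ^ k = m := by
      rw [hm₀, hk, mul_comm]
      exact Nat.ordProj_mul_ordCompl_eq_self m P
    have hndvd : ¬ P ∣ m₀ := Nat.not_dvd_ordCompl hPp hm0
    have hm₀0 : 0 < m₀ := Nat.ordCompl_pos P hm0
    have hPk1 : 1 < P ^ k := Nat.one_lt_pow hk0.ne' hPp.one_lt
    have hm₀lt : m₀ < m := by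
      calc m₀ < m₀ * P ^ k := Nat.lt_mul_iff_one_lt_right hm₀0 |>.2 hPk1
      _ = m := hmul
    -- primes of m₀ are < P
    have hqlt : ∀ q : ℕ, q.Prime → q ∣ m₀ → q < P := by
      intro q hqp hqd
      have hqm : q ∈ m.primeFactors :=
        Nat.mem_primeFactors.2 ⟨hqp, hqd.trans ⟨P ^ k, hmul.symm⟩, hm0⟩
      have hle : q ≤ P := m.primeFactors.le_max' q hqm
      rcases eq_or_lt_of_le hle with rfl | h
      · exact absurd hqd hndvd
      · exact h
    obtain ⟨n, r, hg⟩ := ih m₀ hm₀lt hm₀0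
    have hn0 : n ≠ 0 := hg.2.1.1.ne'
    have hPn : ¬ P ∣ n := fun hd => hndvd (hd.trans ⟨r, hg.1.symm⟩)
    by_cases hc : r = 1 ∧ P ≤ θ n
    · -- absorb P^k into n
      obtain ⟨hr1, hPθ⟩ := hc
      have hnm₀ : n = m₀ := by rw [← hg.1, hr1, mul_one]
      have hPk0 : P ^ k ≠ 0 := (Nat.pow_pos (n := k) hPp.pos).ne'
      have hpf : (n * P ^ k).primeFactors = insert P n.primeFactors := by
        rw [Nat.primeFactors_mul hn0 hPk0, Nat.primeFactors_pow _ hk0.ne',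
          hPp.primeFactors]
        rw [Finset.union_comm]
        exact (Finset.insert_eq P n.primeFactors).symm
      have hfa : ∀ x ∈ n.primeFactors, (n * P ^ k).factorization x = n.factorization x := by
        intro x hx
        have hxP : x ≠ P := fun he => hPn (he ▸ Nat.dvd_of_mem_primeFactors hx)
        rw [Nat.factorization_mul hn0 hPk0, Finsupp.add_apply,
          hPp.factorization_pow, Finsupp.single_apply, if_neg (Ne.symm hxP), add_zero]
      have hltP : ∀ x ∈ n.primeFactors, x < P := fun x hx =>
        hqlt x (Nat.prime_of_mem_primeFactors hx)
          ((Nat.dvd_of_mem_primeFactors hx).trans (hnm₀ ▸ dvd_refl n))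
      refine ⟨n * P ^ k, 1, by rw [mul_one, hnm₀, hmul], ⟨?_, ?_⟩, fun p hp hpd => ?_⟩
      · positivity
      · intro p hp
        rw [hpf] at hp
        rcases Finset.mem_insert.1 hp with rfl | hpn
        · -- p = P
          have hfe : (n * P ^ k).primeFactors.filter (· < P) = n.primeFactors := by
            rw [hpf]
            ext x
            simp only [Finset.mem_filter, Finset.mem_insert]
            constructor
            · rintro ⟨rfl | hx, hlt⟩
              · omega
              · exact hx
            · intro hx
              exact ⟨Or.inr hx, hltP x hx⟩
          rw [hfe]
          have hprod : ∏ q ∈ n.primeFactors, q ^ (n * P ^ k).factorization q = n := by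
            rw [show (∏ q ∈ n.primeFactors, q ^ (n * P ^ k).factorization q)
                = ∏ q ∈ n.primeFactors, q ^ n.factorization q from
              Finset.prod_congr rfl fun x hx => by rw [hfa x hx]]
            have h1 := Nat.factorization_prod_pow_eq_self hn0
            rw [Finsupp.prod, Nat.support_factorization] at h1
            exact h1
          rw [hprod]
          exact hPθ
        · -- p ∈ primeFactors n
          have hpP : p < P := hltP p hpn
          have hfe : (n * P ^ k).primeFactors.filter (· < p)
              = n.primeFactors.filter (· < p) := by
            rw [hpf]
            ext x
            simp only [Finset.mem_filter, Finset.mem_insert]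
            constructor
            · rintro ⟨rfl | hx, hlt⟩
              · omega
              · exact ⟨hx, hlt⟩
            · rintro ⟨hx, hlt⟩
              exact ⟨Or.inr hx, hlt⟩
          rw [hfe]
          have hprod : ∏ q ∈ n.primeFactors.filter (· < p),
              q ^ (n * P ^ k).factorization q
              = ∏ q ∈ n.primeFactors.filter (· < p), q ^ n.factorization q :=
            Finset.prod_congr rfl fun x hx =>
              by rw [hfa x (Finset.mem_filter.1 hx).1]
          rw [hprod]
          exact hg.2.1.2 p hpn
      · exact absurd (Nat.dvd_one.1 hpd ▸ hp) Nat.not_prime_one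
    · -- keep P^k in the rough part
      have hPθ : θ n < (P : ℝ) := by
        rcases not_and_or.1 hc with hr | hle
        · -- r ≠ 1, so r has a prime factor q with θ n < q ≤ P
          have hr0 : r ≠ 0 := by
            rintro rfl
            have h1 := hg.1
            rw [mul_zero] at h1
            omega
          have hr2 : 2 ≤ r := by omega
          have hqp : r.minFac.Prime := Nat.minFac_prime (by omega)
          have hqd : r.minFac ∣ r := Nat.minFac_dvd r
          have h1 : θ n < (r.minFac : ℝ) := hg.2.2 _ hqp hqd
          have h2 : r.minFac < P := hqlt _ hqp (hqd.trans ⟨n, by rw [← hg.1]; ring⟩)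
          have : (r.minFac : ℝ) < (P : ℝ) := by exact_mod_cast h2
          linarith
        · linarith [not_le.1 hle]
      refine ⟨n, r * P ^ k, by rw [← mul_assoc, hg.1, hmul], hg.2.1, fun p hp hpd => ?_⟩
      rcases hp.dvd_mul.1 hpd with h | h
      · exact hg.2.2 p hp h
      · have hpP : p = P :=
          (Nat.prime_dvd_prime_iff_eq hp hPp).1 (hp.dvd_of_dvd_pow h)
        rw [hpP]
        exact hPθ
      
end Aux

/-- Every natural number `m ≥ 1` factors uniquely as `m = n * r` with `n ∈ B_θ`
and every prime factor of `r` exceeding `θ(n)`. -/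
theorem unique_factorization_B (θ : ℕ → ℝ) (hθ1 : 2 ≤ θ 1)
    (hθ : ∀ n : ℕ, 1 ≤ n → (n : ℝ) ≤ θ n) (m : ℕ) (hm : 0 < m) :
    ∃! nr : ℕ × ℕ, nr.1 * nr.2 = m ∧ InB θ nr.1 ∧
      ∀ p : ℕ, p.Prime → p ∣ nr.2 → θ nr.1 < (p : ℝ) := by
  obtain ⟨n, r, hg⟩ := good_exists hθ m hm
  refine ⟨(n, r), ⟨hg.1, hg.2.1, hg.2.2⟩, ?_⟩
  rintro ⟨n', r'⟩ ⟨h1, h2, h3⟩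
  have hg' : Good θ m n' r' := ⟨h1, h2, h3⟩
  obtain ⟨hn, hr⟩ := good_unique hθ hm hg' hg
  simp [hn, hr]
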